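/- Let H be a class of binary functions on a set X with finite VC dimension d. For any finite sample X = {x₁,…,xₙ} ⊆ X with n ≥ d, the number of distinct labelings {(h(x₁),…,h(xₙ)) : h ∈ H} is at most (en/d)^d. -/

import Mathlib

/-- A finite set `s` is shattered by the class `H` of binary functions if every
subset of `s` is picked out by some `h ∈ H`. -/
def Shatters {X : Type*} (H : Set (X → Bool)) (s : Finset X) : Prop :=
  ∀ t ⊆ s, ∃ h ∈ H, ∀ x ∈ s, (h x = true ↔ x ∈ t)


lemma sum_choose_le_aux (n d : ℕ) (hd : 0 < d) (hn : d ≤ n) :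
    ((∑ k ∈ Finset.Iic d, n.choose k : ℕ) : ℝ) ≤ (Real.exp 1 * n / d) ^ d := by
  have hn0 : 0 < n := lt_of_lt_of_le hd hn
  have hnR : (0:ℝ) < n := by exact_mod_cast hn0
  have hdR : (0:ℝ) < d := by exact_mod_cast hd
  set x : ℝ := (d : ℝ) / n with hx
  have hx0 : 0 < x := div_pos hdR hnR
  have hx1 : x ≤ 1 := (div_le_one hnR).2 (by exact_mod_cast hn)
  have h1 : x ^ d * ((∑ k ∈ Finset.Iic d, n.choose k : ℕ) : ℝ)
      ≤ ∑ k ∈ Finset.Iic d, (n.choose k : ℝ) * x ^ k := by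
    push_cast
    rw [Finset.mul_sum]
    refine Finset.sum_le_sum fun k hk => ?_
    rw [mul_comm]
    exact mul_le_mul_of_nonneg_left
      (pow_le_pow_of_le_one hx0.le hx1 (Finset.mem_Iic.1 hk)) (Nat.cast_nonneg _)
  have h2 : ∑ k ∈ Finset.Iic d, (n.choose k : ℝ) * x ^ k ≤ (1 + x) ^ n := by
    rw [add_comm, add_pow]
    have hsub : Finset.Iic d ⊆ Finset.range (n + 1) := fun k hk =>
      Finset.mem_range.2 (lt_of_le_of_lt (le_trans (Finset.mem_Iic.1 hk) hn) (Nat.lt_succ_self n))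
    calc ∑ k ∈ Finset.Iic d, (n.choose k : ℝ) * x ^ k
        ≤ ∑ k ∈ Finset.range (n + 1), (n.choose k : ℝ) * x ^ k :=
          Finset.sum_le_sum_of_subset_of_nonneg hsub (fun k _ _ => by positivity)
      _ = ∑ k ∈ Finset.range (n + 1), x ^ k * 1 ^ (n - k) * (n.choose k : ℝ) :=
          Finset.sum_congr rfl fun k _ => by ring
  have h3 : (1 + x) ^ n ≤ Real.exp 1 ^ d := by
    calc (1 + x) ^ n ≤ Real.exp x ^ n := by
          apply pow_le_pow_left₀ (by positivity)
          rw [add_comm]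
          exact Real.add_one_le_exp x
      _ = Real.exp (x * n) := by rw [← Real.exp_nat_mul, mul_comm]
      _ = Real.exp d := by rw [hx]; field_simp
      _ = Real.exp 1 ^ d := by rw [← Real.exp_nat_mul, mul_one]
  have key : x ^ d * ((∑ k ∈ Finset.Iic d, n.choose k : ℕ) : ℝ) ≤ Real.exp 1 ^ d :=
    h1.trans (h2.trans h3)
  rw [← le_div_iff₀' (by positivity)] at key
  refine key.trans_eq ?_
  rw [hx]
  field_simp
  rw [← mul_pow]
  congr 1
  field_simp

/-- Sauer–Shelah lemma: if every set shattered by `H` has size at most `d`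
(i.e. the VC dimension of `H` is at most `d`), then the number of distinct
labelings induced by `H` on any sample `S` with `|S| = n ≥ d` is at most
`(e·n/d)^d`. -/
theorem sauer_lemma {X : Type*} (H : Set (X → Bool)) (d : ℕ) (hd : 0 < d)
    (hVC : ∀ s : Finset X, Shatters H s → s.card ≤ d)
    (S : Finset X) (hn : d ≤ S.card) :
    (((fun h : X → Bool => fun x : {x // x ∈ S} => h x.1) '' H).ncard : ℝ) ≤
      (Real.exp 1 * S.card / d) ^ d := by
  classical
  set α := {x // x ∈ S}
  set H' : Set (α → Bool) := (fun h : X → Bool => fun x : α => h x.1) '' H with hH'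
  have hfin : H'.Finite := Set.toFinite _
  set F : Finset (α → Bool) := hfin.toFinset with hF
  set 𝒜 : Finset (Finset α) := F.image (fun f => Finset.univ.filter (fun x => f x = true))
    with h𝒜
  have hinj : Function.Injective (fun f : α → Bool => Finset.univ.filter (fun x => f x = true)) := by
    intro f g hfg
    funext x
    have := Finset.ext_iff.1 hfg x
    simp only [Finset.mem_filter, Finset.mem_univ, true_and] at this
    cases hfx : f x <;> cases hgx : g x <;> simp_all
  have hcard : H'.ncard = 𝒜.card := by
    rw [Set.ncard_eq_toFinset_card _ hfin, h𝒜, Finset.card_image_of_injective _ hinj]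
  -- VC dimension bound
  have hvc : 𝒜.vcDim ≤ d := by
    refine Finset.sup_le fun s hs => ?_
    rw [Finset.mem_shatterer] at hs
    set s' : Finset X := s.image Subtype.val with hs'
    have hcs : s'.card = s.card := Finset.card_image_of_injective _ Subtype.val_injective
    rw [← hcs]
    refine hVC s' fun t ht => ?_
    obtain ⟨u, hu𝒜, hsu⟩ := hs (Finset.filter_subset (fun x => x.1 ∈ t) s)
    rw [h𝒜, Finset.mem_image] at hu𝒜
    obtain ⟨f, hfF, rfl⟩ := hu𝒜
    rw [hF, Set.Finite.mem_toFinset, hH'] at hfF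
    obtain ⟨h, hhH, rfl⟩ := hfF
    refine ⟨h, hhH, fun x hx => ?_⟩
    rw [hs', Finset.mem_image] at hx
    obtain ⟨y, hy, rfl⟩ := hx
    have := Finset.ext_iff.1 hsu y
    simp only [Finset.mem_inter, Finset.mem_filter, Finset.mem_univ, true_and] at this
    constructor
    · intro hh
      exact ((this.1 ⟨hy, hh⟩).2)
    · intro hh
      exact (this.2 ⟨hy, hh⟩).2
  -- counting
  have hchain : 𝒜.card ≤ ∑ k ∈ Finset.Iic d, (S.card).choose k := by
    calc 𝒜.card ≤ 𝒜.shatterer.card := Finset.card_le_card_shatterer 𝒜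
      _ ≤ ∑ k ∈ Finset.Iic 𝒜.vcDim, (Fintype.card α).choose k :=
          Finset.card_shatterer_le_sum_vcDim
      _ ≤ ∑ k ∈ Finset.Iic d, (Fintype.card α).choose k :=
          Finset.sum_le_sum_of_subset (Finset.Iic_subset_Iic.2 hvc)
      _ = ∑ k ∈ Finset.Iic d, (S.card).choose k := by rw [Fintype.card_coe]
  have := sum_choose_le_aux S.card d hd hn
  calc (H'.ncard : ℝ) = (𝒜.card : ℝ) := by rw [hcard]
    _ ≤ ((∑ k ∈ Finset.Iic d, (S.card).choose k : ℕ) : ℝ) := by exact_mod_cast hchain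
    _ ≤ _ := this
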